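/- In Strings and Coins on the loopy cycle C_(n,1) (a cycle C_n with a single loop attached at one vertex, n ≥ 3), Player 1 wins under optimal play. -/

import Mathlib

/-- A position in Strings and Coins: a finite multigraph, with vertex set `verts`
and a multiset of (possibly loop) edges, each given as an ordered pair. -/
structure SCPos (V : Type) where
  verts : Finset V
  edges : Multiset (V × V)

variable {V : Type} [DecidableEq V]

/-- Number of edges incident to `v` (each edge, including a loop, counted once);
only being zero or nonzero matters for captures. -/
def SCPos.deg (p : SCPos V) (v : V) : ℕ :=
  (p.edges.filter (fun f => f.1 = v ∨ f.2 = v)).card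

/-- Degree of `v`, where a loop at `v` contributes 2. -/
def SCPos.degree (p : SCPos V) (v : V) : ℕ :=
  (p.edges.map (fun e => (if e.1 = v then 1 else 0) + (if e.2 = v then 1 else 0))).sum

/-- The position obtained by removing one copy of edge `e`. -/
def SCPos.remove (p : SCPos V) (e : V × V) : SCPos V :=
  ⟨p.verts, p.edges.erase e⟩

/-- The number of vertices captured by removing edge `e` from `p`:
endpoints of `e` whose degree drops to zero. -/
def SCPos.caps (p : SCPos V) (e : V × V) : ℕ :=
  (p.verts.filter (fun v => (v = e.1 ∨ v = e.2) ∧ (p.remove e).deg v = 0)).card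

/-- Optimal score `(mover's points, opponent's points)` of Strings and Coins,
under play where each player maximizes their own number of captured vertices.
A player who captures at least one vertex moves again. -/
noncomputable def SCPos.score (p : SCPos V) : ℕ × ℕ :=
  if h : p.edges = 0 then (0, 0)
  else
    (p.edges.toList.attach.map (fun ⟨e, he⟩ =>
      let s := (p.remove e).score
      let c := p.caps e
      if c = 0 then (s.2, s.1) else (s.1 + c, s.2))).foldl
      (fun best o => if best.1 ≤ o.1 then o else best) (0, 0)
termination_by p.edges.card
decreasing_by
  exact Multiset.card_erase_lt_of_mem (Multiset.mem_toList.mp he)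

/-- The cycle graph `C_n` as a Strings and Coins position. -/
def cyclePos (n : ℕ) : SCPos ℕ :=
  ⟨Finset.range n, ((List.range n).map (fun i => (i, (i + 1) % n)) : List (ℕ × ℕ))⟩

/-- The friendship graph `F_n`: `n` triangles sharing the common vertex `0`. -/
def friendshipPos (n : ℕ) : SCPos ℕ :=
  ⟨Finset.range (2 * n + 1),
   (((List.range n).flatMap fun i =>
      [(0, 2 * i + 1), (0, 2 * i + 2), (2 * i + 1, 2 * i + 2)]) : List (ℕ × ℕ))⟩

/-- The pinwheel graph `PW_n`: `n` copies of `C_4` sharing the common vertex `0`. -/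
def pinwheelPos (n : ℕ) : SCPos ℕ :=
  ⟨Finset.range (3 * n + 1),
   (((List.range n).flatMap fun i =>
      [(0, 3 * i + 1), (3 * i + 1, 3 * i + 2), (3 * i + 2, 3 * i + 3), (3 * i + 3, 0)]) :
     List (ℕ × ℕ))⟩

/-- The loopy star `L_n`: center `0`, outer vertices `1, …, n`, each joined to the
center by an edge and carrying one loop. -/
def loopyStarPos (n : ℕ) : SCPos ℕ :=
  ⟨Finset.range (n + 1),
   (((List.range n).flatMap fun i => [(0, i + 1), (i + 1, i + 1)]) : List (ℕ × ℕ))⟩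

/-- The double loopy star `L(n,2)`: center `0`, outer vertices `1, …, n`, each joined
to the center by an edge and carrying two loops. -/
def doubleLoopyStarPos (n : ℕ) : SCPos ℕ :=
  ⟨Finset.range (n + 1),
   (((List.range n).flatMap fun i => [(0, i + 1), (i + 1, i + 1), (i + 1, i + 1)]) :
     List (ℕ × ℕ))⟩

/-- The complete bipartite graph `K(1, b)` (a star with `b` leaves). -/
def starPos (b : ℕ) : SCPos ℕ :=
  ⟨Finset.range (b + 1), (((List.range b).map fun i => (0, i + 1)) : List (ℕ × ℕ))⟩

/-- The complete bipartite graph `K(2, b)`: part `{0, 1}` and part `{2, …, b+1}`. -/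
def k2bPos (b : ℕ) : SCPos ℕ :=
  ⟨Finset.range (b + 2),
   (((List.range b).flatMap fun j => [(0, j + 2), (1, j + 2)]) : List (ℕ × ℕ))⟩

/-- The balloon path `BP_n`: a path on vertices `0, …, n-1` with one loop at each vertex. -/
def balloonPathPos (n : ℕ) : SCPos ℕ :=
  ⟨Finset.range n,
   ((((List.range (n - 1)).map fun i => (i, i + 1)) ++
     ((List.range n).map fun i => (i, i))) : List (ℕ × ℕ))⟩

/-- The loopy cycle `C_(n,1)`: the cycle `C_n` with one extra loop at vertex `0`. -/
def loopyCyclePos (n : ℕ) : SCPos ℕ :=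
  ⟨Finset.range n, (0, 0) ::ₘ (cyclePos n).edges⟩

/-- The Strings and Coins position of a finite simple graph: all vertices,
and one (arbitrarily oriented) edge for each edge of the graph. -/
noncomputable def posOfGraph {W : Type} [Fintype W] [DecidableEq W]
    (G : SimpleGraph W) [DecidableRel G.Adj] : SCPos W :=
  ⟨Finset.univ, G.edgeFinset.val.map Quot.out⟩

variable {V : Type} [DecidableEq V]

noncomputable def optval (p : SCPos V) (e : V × V) : ℕ × ℕ :=
  let s := (p.remove e).score
  let c := p.caps e
  if c = 0 then (s.2, s.1) else (s.1 + c, s.2)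

def fmax : ℕ × ℕ → ℕ × ℕ → ℕ × ℕ := fun best o => if best.1 ≤ o.1 then o else best

lemma score_eq (p : SCPos V) (h : ¬ p.edges = 0) :
    p.score = (p.edges.toList.attach.map (fun x => optval p x.1)).foldl fmax (0, 0) := by
  rw [SCPos.score.eq_1, dif_neg h]
  rfl

lemma score_empty (p : SCPos V) (h : p.edges = 0) : p.score = (0, 0) := by
  rw [SCPos.score.eq_1, dif_pos h]

lemma foldl_mem (l : List (ℕ × ℕ)) (a : ℕ × ℕ) : l.foldl fmax a ∈ a :: l := by
  induction l generalizing a with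
  | nil => simp
  | cons b t ih =>
    have h := ih (fmax a b)
    rw [List.foldl_cons]
    rcases List.mem_cons.mp h with h | h
    · rw [h]; unfold fmax; split <;> simp
    · simp [h]

lemma foldl_mem' (l : List (ℕ × ℕ)) (h : l ≠ []) : l.foldl fmax (0, 0) ∈ l := by
  match l with
  | b :: t =>
    have h0 : fmax (0, 0) b = b := by unfold fmax; simp
    rw [List.foldl_cons, h0]
    exact foldl_mem t b

lemma le_foldl (l : List (ℕ × ℕ)) (a : ℕ × ℕ) :
    ∀ o ∈ a :: l, o.1 ≤ (l.foldl fmax a).1 := by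
  induction l generalizing a with
  | nil => intro o ho; simp at ho; simp [ho]
  | cons b t ih =>
    intro o ho
    rw [List.foldl_cons]
    have hab : a.1 ≤ (fmax a b).1 ∧ b.1 ≤ (fmax a b).1 := by
      unfold fmax; split <;> simp_all <;> omega
    have hfold := ih (fmax a b) _ (List.mem_cons_self (a := fmax a b) (l := t))
    rcases List.mem_cons.mp ho with h | h
    · subst h; exact le_trans hab.1 hfold
    · rcases List.mem_cons.mp h with h | h
      · subst h; exact le_trans hab.2 hfold
      · exact ih (fmax a b) o (List.mem_cons_of_mem _ h)

lemma exists_score (p : SCPos V) (h : ¬ p.edges = 0) :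
    ∃ e ∈ p.edges, p.score = optval p e := by
  rw [score_eq p h]
  have hne : p.edges.toList ≠ [] := by
    simpa [Multiset.toList_eq_nil] using h
  have hl : p.edges.toList.attach.map (fun x => optval p x.1) ≠ [] := by
    simp [hne]
  obtain ⟨⟨e, he⟩, _, hval⟩ := List.mem_map.mp (foldl_mem' _ hl)
  exact ⟨e, Multiset.mem_toList.mp he, hval.symm⟩

lemma le_score (p : SCPos V) (e : V × V) (he : e ∈ p.edges) :
    (optval p e).1 ≤ p.score.1 := by
  have h : ¬ p.edges = 0 := by
    intro h0; rw [h0] at he; simp at he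
  rw [score_eq p h]
  have he' : e ∈ p.edges.toList := Multiset.mem_toList.mpr he
  have hm : optval p e ∈ p.edges.toList.attach.map (fun x => optval p x.1) :=
    List.mem_map.mpr ⟨⟨e, he'⟩, List.mem_attach _ _, rfl⟩
  exact le_foldl _ _ _ (List.mem_cons_of_mem _ hm)

lemma deg_remove (p : SCPos V) (e : V × V) (he : e ∈ p.edges) (v : V) :
    p.deg v = (p.remove e).deg v + (if e.1 = v ∨ e.2 = v then 1 else 0) := by
  unfold SCPos.deg SCPos.remove
  conv_lhs => rw [← Multiset.cons_erase he]
  rw [Multiset.filter_cons]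
  split_ifs with h <;> simp [Nat.add_comm]

lemma deg_pos_of_mem (p : SCPos V) (f : V × V) (hf : f ∈ p.edges) (v : V)
    (hv : f.1 = v ∨ f.2 = v) : p.deg v ≠ 0 := by
  unfold SCPos.deg
  have : f ∈ p.edges.filter (fun f => f.1 = v ∨ f.2 = v) :=
    Multiset.mem_filter.mpr ⟨hf, hv⟩
  intro h0
  rw [Multiset.card_eq_zero] at h0
  rw [h0] at this
  simp at this

lemma deg_eq_zero (p : SCPos V) (v : V)
    (h : ∀ f ∈ p.edges, ¬ (f.1 = v ∨ f.2 = v)) : p.deg v = 0 := by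
  unfold SCPos.deg
  rw [Multiset.card_eq_zero, Multiset.filter_eq_nil]
  exact h

lemma filter_card_split (p : SCPos V) (e : V × V) (he : e ∈ p.edges) :
    (p.verts.filter fun v => p.deg v ≠ 0).card
      = (p.verts.filter fun v => (p.remove e).deg v ≠ 0).card + p.caps e := by
  unfold SCPos.caps
  rw [← Finset.card_union_of_disjoint]
  · congr 1
    ext v
    simp only [Finset.mem_union, Finset.mem_filter]
    constructor
    · rintro ⟨hv, hd⟩
      by_cases hr : (p.remove e).deg v = 0
      · have hdr := deg_remove p e he v
        rw [hr] at hdr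
        have hcase : e.1 = v ∨ e.2 = v := by
          by_contra hc
          rw [if_neg hc] at hdr
          omega
        exact Or.inr ⟨hv, hcase.imp Eq.symm Eq.symm, hr⟩
      · exact Or.inl ⟨hv, hr⟩
    · rintro (⟨hv, hd⟩ | ⟨hv, hd, hr⟩)
      · refine ⟨hv, ?_⟩
        have hdr := deg_remove p e he v
        intro h0; rw [h0] at hdr; omega
      · refine ⟨hv, ?_⟩
        have hdr := deg_remove p e he v
        have : e.1 = v ∨ e.2 = v := hd.imp Eq.symm Eq.symm
        rw [if_pos this, hr] at hdr
        omega
  · rw [Finset.disjoint_left]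
    rintro v hv hv'
    simp only [Finset.mem_filter] at hv hv'
    exact hv.2 hv'.2.2

lemma score_sum_aux : ∀ (N : ℕ) (p : SCPos V), p.edges.card ≤ N →
    p.score.1 + p.score.2 = (p.verts.filter fun v => p.deg v ≠ 0).card := by
  intro N
  induction N with
  | zero =>
    intro p hp
    have h0 : p.edges = 0 := by
      rw [← Multiset.card_eq_zero]; omega
    rw [score_empty p h0]
    have hdeg : ∀ v, p.deg v = 0 := by
      intro v; unfold SCPos.deg; rw [h0]; rfl
    simp [hdeg]
  | succ N ih =>
    intro p hp
    by_cases h0 : p.edges = 0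
    · rw [score_empty p h0]
      have hdeg : ∀ v, p.deg v = 0 := by
        intro v; unfold SCPos.deg; rw [h0]; rfl
      simp [hdeg]
    · obtain ⟨e, he, hs⟩ := exists_score p h0
      rw [hs, filter_card_split p e he]
      have hcard : (p.remove e).edges.card ≤ N := by
        have h2 : 0 < p.edges.card := Multiset.card_pos.mpr h0
        have h1 : (p.edges.erase e).card = p.edges.card - 1 := by
          rw [Multiset.card_erase_of_mem he, Nat.pred_eq_sub_one]
        unfold SCPos.remove
        simp only
        omega
      have hrec := ih (p.remove e) hcard
      have hverts : (p.remove e).verts = p.verts := rfl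
      rw [hverts] at hrec
      unfold optval
      by_cases hc : p.caps e = 0 <;> simp only [hc, if_true, if_false, reduceIte] <;> omega

lemma score_sum (p : SCPos V) :
    p.score.1 + p.score.2 = (p.verts.filter fun v => p.deg v ≠ 0).card :=
  score_sum_aux p.edges.card p le_rfl

lemma score_pin (p : SCPos V) (k : ℕ) (hle : k ≤ p.score.1)
    (hsum : (p.verts.filter fun v => p.deg v ≠ 0).card = k) : p.score = (k, 0) := by
  have h := score_sum p
  rw [hsum] at h
  have h1 : p.score.1 = k := by omega
  have h2 : p.score.2 = 0 := by omega
  rw [← h1, ← h2]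

lemma mod_ne {n t : ℕ} (a : ℕ) (h1 : 1 ≤ t) (h2 : t < n) : (a + t) % n ≠ a % n := by
  intro h
  have hm : t ≡ 0 [MOD n] := by
    have : a + t ≡ a + 0 [MOD n] := by simpa [Nat.ModEq] using h
    exact (Nat.ModEq.add_left_cancel' a) this
  have : t % n = 0 := by simpa [Nat.ModEq] using hm
  rw [Nat.mod_eq_of_lt h2] at this
  omega

lemma mod_inj {n : ℕ} (a : ℕ) {s t : ℕ} (hs : s < n) (ht : t < n)
    (h : (a + s) % n = (a + t) % n) : s = t := by
  have hm : s ≡ t [MOD n] := (Nat.ModEq.add_left_cancel' a) h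
  have h2 : s % n = t % n := hm
  rw [Nat.mod_eq_of_lt hs, Nat.mod_eq_of_lt ht] at h2
  exact h2

def arcPos (n a m : ℕ) : SCPos ℕ :=
  ⟨Finset.range n, ((List.range m).map (fun j => ((a + j) % n, (a + j + 1) % n)) : List (ℕ × ℕ))⟩

@[simp] lemma arc_verts (n a m : ℕ) : (arcPos n a m).verts = Finset.range n := rfl

lemma mem_arc {n a m : ℕ} {x : ℕ × ℕ} :
    x ∈ (arcPos n a m).edges ↔ ∃ j < m, x = ((a + j) % n, (a + j + 1) % n) := by
  simp [arcPos, eq_comm]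

lemma arc_edges_succ (n a m : ℕ) :
    (arcPos n a (m + 1)).edges = (a % n, (a + 1) % n) ::ₘ (arcPos n (a + 1) m).edges := by
  show ((List.range (m+1)).map (fun j => ((a + j) % n, (a + j + 1) % n)) : Multiset (ℕ × ℕ)) = _
  rw [List.range_succ_eq_map, List.map_cons, List.map_map]
  have hf : ((fun j => ((a + j) % n, (a + j + 1) % n)) ∘ Nat.succ)
      = (fun j => ((a + 1 + j) % n, (a + 1 + j + 1) % n)) := by
    funext j
    simp only [Function.comp]
    congr 2 <;> omega
  rw [hf]
  simp only [Nat.add_zero]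
  rfl

lemma arc_remove (n a m : ℕ) :
    (arcPos n a (m + 1)).remove (a % n, (a + 1) % n) = arcPos n (a + 1) m := by
  show (⟨Finset.range n, (arcPos n a (m+1)).edges.erase _⟩ : SCPos ℕ) = _
  rw [arc_edges_succ, Multiset.erase_cons_head]
  rfl

lemma arc_count (n a m : ℕ) (hm1 : 1 ≤ m) (hm : m ≤ n - 1) (hn : 1 ≤ n) :
    ((arcPos n a m).verts.filter fun v => (arcPos n a m).deg v ≠ 0).card = m + 1 := by
  have hset : ((arcPos n a m).verts.filter fun v => (arcPos n a m).deg v ≠ 0)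
      = (Finset.range (m + 1)).image (fun t => (a + t) % n) := by
    ext v
    simp only [Finset.mem_filter, Finset.mem_image, Finset.mem_range, arc_verts]
    constructor
    · rintro ⟨hv, hd⟩
      have hne : (arcPos n a m).edges.filter (fun f => f.1 = v ∨ f.2 = v) ≠ 0 := by
        intro h0
        exact hd (by unfold SCPos.deg; rw [h0]; rfl)
      obtain ⟨f, hf⟩ := Multiset.exists_mem_of_ne_zero hne
      rw [Multiset.mem_filter] at hf
      obtain ⟨j, hj, hfx⟩ := mem_arc.mp hf.1
      rcases hf.2 with h | h
      · exact ⟨j, by omega, by rw [hfx] at h; exact h⟩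
      · exact ⟨j + 1, by omega, by rw [hfx] at h; exact h⟩
    · rintro ⟨t, ht, hv⟩
      refine ⟨by rw [← hv]; exact Nat.mod_lt _ (by omega), ?_⟩
      by_cases htm : t < m
      · exact deg_pos_of_mem _ ((a + t) % n, (a + t + 1) % n)
          (mem_arc.mpr ⟨t, htm, rfl⟩) v (Or.inl hv)
      · have htm' : t = m := by omega
        refine deg_pos_of_mem _ ((a + (m - 1)) % n, (a + (m - 1) + 1) % n)
          (mem_arc.mpr ⟨m - 1, by omega, rfl⟩) v (Or.inr ?_)
        rw [show a + (m - 1) + 1 = a + m from by omega, ← hv, htm']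
  rw [hset, Finset.card_image_of_injOn, Finset.card_range]
  intro s hs t ht h
  simp only [Finset.mem_coe, Finset.mem_range] at hs ht
  exact mod_inj a (by omega) (by omega) h

lemma arc_score (n : ℕ) (hn : 2 ≤ n) :
    ∀ m, 1 ≤ m → m ≤ n - 1 → ∀ a, (arcPos n a m).score = (m + 1, 0) := by
  intro m
  induction m with
  | zero => omega
  | succ m ih =>
    intro _ h2 a
    set e : ℕ × ℕ := (a % n, (a + 1) % n) with he_def
    have he : e ∈ (arcPos n a (m + 1)).edges := by
      refine mem_arc.mpr ⟨0, by omega, ?_⟩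
      simp [he_def]
    have hrm := arc_remove n a m
    -- compute s = score of remainder, and caps
    by_cases hm : m = 0
    · subst hm
      -- remainder empty
      have hs : (arcPos n (a + 1) 0).score = (0, 0) := score_empty _ (by rfl)
      have hcaps : (arcPos n a 1).caps e = 2 := by
        unfold SCPos.caps
        rw [hrm]
        simp only [arc_verts]
        have hfe : (Finset.range n).filter
            (fun v => (v = e.1 ∨ v = e.2) ∧ (arcPos n (a+1) 0).deg v = 0)
            = {a % n, (a + 1) % n} := by
          ext v
          simp only [Finset.mem_filter, Finset.mem_range, Finset.mem_insert,
            Finset.mem_singleton, he_def]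
          constructor
          · rintro ⟨_, h, _⟩; exact h
          · rintro (h | h) <;> subst h
            · exact ⟨Nat.mod_lt _ (by omega), Or.inl rfl,
                deg_eq_zero _ _ (by intro f hf; simp [arcPos] at hf)⟩
            · exact ⟨Nat.mod_lt _ (by omega), Or.inr rfl,
                deg_eq_zero _ _ (by intro f hf; simp [arcPos] at hf)⟩
        rw [hfe]
        rw [Finset.card_insert_of_notMem (by
          simp only [Finset.mem_singleton]
          exact (mod_ne a (le_refl 1) (by omega)).symm)]
        simp
      have hopt : optval (arcPos n a 1) e = (2, 0) := by
        unfold optval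
        rw [hrm, hcaps, hs]
        norm_num
      have hle : 2 ≤ (arcPos n a 1).score.1 := by
        have := le_score _ e he
        rw [hopt] at this
        exact this
      exact score_pin _ 2 hle (arc_count n a 1 (by omega) (by omega) (by omega))
    · -- m ≥ 1
      have hs := ih (by omega) (by omega) (a + 1)
      have hcaps : (arcPos n a (m + 1)).caps e = 1 := by
        unfold SCPos.caps
        rw [hrm]
        simp only [arc_verts]
        have hfe : (Finset.range n).filter
            (fun v => (v = e.1 ∨ v = e.2) ∧ (arcPos n (a+1) m).deg v = 0)
            = {a % n} := by
          ext v
          simp only [Finset.mem_filter, Finset.mem_range, Finset.mem_singleton, he_def]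
          constructor
          · rintro ⟨_, h, hd⟩
            rcases h with h | h
            · exact h
            · exfalso
              refine deg_pos_of_mem _ ((a + 1 + 0) % n, (a + 1 + 0 + 1) % n)
                (mem_arc.mpr ⟨0, by omega, rfl⟩) v (Or.inl ?_) hd
              rw [h]
          · rintro h; subst h
            refine ⟨Nat.mod_lt _ (by omega), Or.inl rfl, deg_eq_zero _ _ ?_⟩
            rintro f hf hv
            obtain ⟨j, hj, hfx⟩ := mem_arc.mp hf
            subst hfx
            rcases hv with h | h
            · have : (a + (1 + j)) % n = a % n := by rw [← h]; congr 1; omega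
              exact mod_ne a (by omega) (by omega) this
            · have : (a + (j + 2)) % n = a % n := by rw [← h]; congr 1; omega
              exact mod_ne a (by omega) (by omega) this
        rw [hfe, Finset.card_singleton]
      have hopt : optval (arcPos n a (m + 1)) e = (m + 2, 0) := by
        unfold optval
        rw [hrm, hcaps, hs]
        norm_num
      have hle : m + 2 ≤ (arcPos n a (m + 1)).score.1 := by
        have := le_score _ e he
        rw [hopt] at this
        exact this
      have hc := arc_count n a (m + 1) (by omega) (by omega) (by omega)
      exact score_pin _ (m + 2) hle (by rw [hc])

lemma mem_cycle {n : ℕ} {x : ℕ × ℕ} :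
    x ∈ (cyclePos n).edges ↔ ∃ i < n, x = (i, (i + 1) % n) := by
  simp [cyclePos, eq_comm]

lemma cycle_edges_eq (n : ℕ) (hn : 2 ≤ n) {i : ℕ} (hi : i < n) :
    (cyclePos n).edges = (i, (i + 1) % n) ::ₘ (arcPos n (i + 1) (n - 1)).edges := by
  have hnd : (List.map (fun i => (i, (i + 1) % n)) (List.range n)).Nodup :=
    (List.nodup_range (n := n)).map fun a b h => congrArg Prod.fst h
  have hnd2 : (List.map (fun j => ((i + 1 + j) % n, (i + 1 + j + 1) % n))
      (List.range (n - 1))).Nodup := by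
    refine List.Nodup.map_on ?_ List.nodup_range
    intro x hx y hy h
    rw [List.mem_range] at hx hy
    exact mod_inj (i + 1) (by omega) (by omega) (congrArg Prod.fst h)
  have hnotmem : (i, (i + 1) % n) ∉ (List.map (fun j => ((i + 1 + j) % n, (i + 1 + j + 1) % n))
      (List.range (n - 1))) := by
    intro h
    obtain ⟨j, hj, hx⟩ := List.mem_map.mp h
    rw [List.mem_range] at hj
    have h1 : (i + 1 + j) % n = i := congrArg Prod.fst hx
    have h2 : (i + (1 + j)) % n = i % n := by
      rw [show i + (1 + j) = i + 1 + j from by omega, h1, Nat.mod_eq_of_lt hi]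
    exact mod_ne i (by omega) (by omega) h2
  show ((List.map (fun i => (i, (i + 1) % n)) (List.range n) : Multiset (ℕ × ℕ)))
      = (i, (i + 1) % n) ::ₘ
        ((List.map (fun j => ((i + 1 + j) % n, (i + 1 + j + 1) % n)) (List.range (n - 1)) :
          List (ℕ × ℕ)) : Multiset (ℕ × ℕ))
  rw [Multiset.cons_coe, Multiset.coe_eq_coe]
  refine (List.perm_ext_iff_of_nodup hnd (List.nodup_cons.mpr ⟨hnotmem, hnd2⟩)).mpr fun x => ?_
  rw [List.mem_cons]
  simp only [List.mem_map, List.mem_range]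
  constructor
  · rintro ⟨t, ht, rfl⟩
    by_cases hti : t = i
    · exact Or.inl (by rw [hti])
    refine Or.inr ⟨if i < t then t - i - 1 else n - i - 1 + t, by split <;> omega, ?_⟩
    have hc : i + 1 + (if i < t then t - i - 1 else n - i - 1 + t) = t
        ∨ i + 1 + (if i < t then t - i - 1 else n - i - 1 + t) = n + t := by
      split <;> omega
    rcases hc with hc | hc <;> rw [hc]
    · exact Prod.ext (Nat.mod_eq_of_lt ht) rfl
    · refine Prod.ext ?_ ?_
      · show (n + t) % n = t
        rw [Nat.add_mod_left, Nat.mod_eq_of_lt ht]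
      · show (n + t + 1) % n = (t + 1) % n
        rw [show n + t + 1 = n + (t + 1) from rfl, Nat.add_mod_left]
  · rintro (h | ⟨j, hj, rfl⟩)
    · exact ⟨i, hi, h.symm⟩
    refine ⟨(i + 1 + j) % n, Nat.mod_lt _ (by omega), Prod.ext rfl ?_⟩
    show ((i + 1 + j) % n + 1) % n = (i + 1 + j + 1) % n
    conv_rhs => rw [Nat.add_mod (i + 1 + j) 1 n]
    rw [Nat.mod_eq_of_lt (show 1 < n by omega)]

lemma cycle_remove (n : ℕ) (hn : 2 ≤ n) {i : ℕ} (hi : i < n) :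
    (cyclePos n).remove (i, (i + 1) % n) = arcPos n (i + 1) (n - 1) := by
  unfold SCPos.remove
  rw [cycle_edges_eq n hn hi, Multiset.erase_cons_head]
  rfl

lemma cycle_caps (n : ℕ) (hn : 2 ≤ n) {i : ℕ} (hi : i < n) :
    (cyclePos n).caps (i, (i + 1) % n) = 0 := by
  unfold SCPos.caps
  rw [cycle_remove n hn hi, Finset.card_eq_zero, Finset.filter_eq_empty_iff]
  rintro v hv ⟨h12, hd⟩
  rcases h12 with h | h
  · refine deg_pos_of_mem _ ((i + 1 + (n - 2)) % n, (i + 1 + (n - 2) + 1) % n)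
      (mem_arc.mpr ⟨n - 2, by omega, rfl⟩) v (Or.inr ?_) hd
    show (i + 1 + (n - 2) + 1) % n = v
    rw [show i + 1 + (n - 2) + 1 = i + n from by omega, Nat.add_mod_right,
      Nat.mod_eq_of_lt hi, h]
  · refine deg_pos_of_mem _ ((i + 1 + 0) % n, (i + 1 + 0 + 1) % n)
      (mem_arc.mpr ⟨0, by omega, rfl⟩) v (Or.inl ?_) hd
    show (i + 1 + 0) % n = v
    rw [h]

lemma cycle_score (n : ℕ) (hn : 3 ≤ n) : (cyclePos n).score = (0, n) := by
  have h0 : ¬ (cyclePos n).edges = 0 := by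
    intro h
    have hm : ((0 : ℕ), (0 + 1) % n) ∈ (cyclePos n).edges := mem_cycle.mpr ⟨0, by omega, rfl⟩
    rw [h] at hm
    simp at hm
  obtain ⟨e, he, hs⟩ := exists_score _ h0
  obtain ⟨i, hi, rfl⟩ := mem_cycle.mp he
  rw [hs]
  unfold optval
  rw [cycle_caps n (by omega) hi, cycle_remove n (by omega) hi,
    arc_score n (by omega) (n - 1) (by omega) (by omega) (i + 1)]
  simp [show n - 1 + 1 = n from by omega]


/-- On the loopy cycle `C_(n,1)` (`n ≥ 3`), a cycle with a single loop attached at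
one vertex, Player 1 wins under optimal play. -/
theorem stmt19 (n : ℕ) (hn : 3 ≤ n) :
    ((loopyCyclePos n).score).2 < ((loopyCyclePos n).score).1 := by
  set p := loopyCyclePos n with hp
  have hrm : p.remove (0, 0) = cyclePos n := by
    show (⟨Finset.range n, ((0, 0) ::ₘ (cyclePos n).edges).erase (0, 0)⟩ : SCPos ℕ) = cyclePos n
    rw [Multiset.erase_cons_head]
    rfl
  have he : ((0 : ℕ), (0 : ℕ)) ∈ p.edges := by
    show ((0 : ℕ), (0 : ℕ)) ∈ (0, 0) ::ₘ (cyclePos n).edges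
    exact Multiset.mem_cons_self _ _
  have hcaps : p.caps (0, 0) = 0 := by
    unfold SCPos.caps
    rw [hrm, Finset.card_eq_zero, Finset.filter_eq_empty_iff]
    rintro v hv ⟨h12, hd⟩
    have hv0 : v = 0 := by rcases h12 with h | h <;> exact h
    subst hv0
    exact deg_pos_of_mem _ ((0 : ℕ), (0 + 1) % n) (mem_cycle.mpr ⟨0, by omega, rfl⟩)
      0 (Or.inl rfl) hd
  have hopt : optval p (0, 0) = (n, 0) := by
    unfold optval
    rw [hcaps, hrm, cycle_score n hn]
    simp
  have hle : n ≤ p.score.1 := by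
    have h := le_score p (0, 0) he
    rw [hopt] at h
    exact h
  have hcount : (p.verts.filter fun v => p.deg v ≠ 0).card = n := by
    have hfe : p.verts.filter (fun v => p.deg v ≠ 0) = p.verts := by
      apply Finset.filter_true_of_mem
      intro v hv
      have hvn : v < n := Finset.mem_range.mp hv
      have hmem : (v, (v + 1) % n) ∈ p.edges := by
        show (v, (v + 1) % n) ∈ (0, 0) ::ₘ (cyclePos n).edges
        exact Multiset.mem_cons_of_mem (mem_cycle.mpr ⟨v, hvn, rfl⟩)
      exact deg_pos_of_mem p (v, (v + 1) % n) hmem v (Or.inl rfl)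
    rw [hfe]
    exact Finset.card_range n
  have hsum := score_sum p
  rw [hcount] at hsum
  omega
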